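/- For every H ∈ (0,1): Σ_{j=2}^{∞} j^{1/4} (log_* j)^{3/4} j^{H−5/2} < (5/4 − H)^{−1} + (5/4 − H)^{−2} e^{H−5/4}; consequently this sum is less than 2.5 if 0 < H < 1/2 and less than 16.5 if 1/2 < H < 1. Moreover Σ_{j=2}^{∞} j^{1/4}(log_* j)^{3/4} j^{H−5/2} < ∫_1^∞ x^{H−9/4} log_*(x) dx = (5/4 − H)^{−1} + (5/4 − H)^{−2} e^{H−5/4}. -/

import Mathlib

/-- `log_*(x) = max(1, log x)`. -/
noncomputable def logStar (x : ℝ) : ℝ := max 1 (Real.log x)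


open Real Set MeasureTheory Filter

lemma one_le_logStar (x : ℝ) : 1 ≤ logStar x := le_max_left _ _

lemma logStar_eq_one {x : ℝ} (hx0 : 0 < x) (hx : x ≤ Real.exp 1) : logStar x = 1 := by
  have : Real.log x ≤ 1 := by
    have := Real.log_le_log hx0 hx
    rwa [Real.log_exp] at this
  simp [logStar, this]

lemma logStar_eq_log {x : ℝ} (hx : Real.exp 1 ≤ x) : logStar x = Real.log x := by
  have : (1:ℝ) ≤ Real.log x := by
    have := Real.log_le_log (Real.exp_pos 1) hx
    rwa [Real.log_exp] at this
  simp [logStar, this]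

lemma two_lt_exp_one : (2:ℝ) < Real.exp 1 := by
  have := Real.exp_one_gt_d9
  linarith

noncomputable def gH (c : ℝ) (x : ℝ) : ℝ := x ^ c * logStar x

lemma gH_nonneg {c x : ℝ} (hx : 0 ≤ x) : 0 ≤ gH c x :=
  mul_nonneg (Real.rpow_nonneg hx c) (le_trans zero_le_one (one_le_logStar x))

lemma gH_anti {c : ℝ} (hc : c ≤ -1) : AntitoneOn (gH c) (Set.Ici 1) := by
  have key : ∀ x y : ℝ, Real.exp 1 ≤ x → x ≤ y → gH c y ≤ gH c x := by
    intro x y hex hxy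
    have hx0 : (0:ℝ) < x := lt_of_lt_of_le (Real.exp_pos 1) hex
    have hy0 : (0:ℝ) < y := lt_of_lt_of_le hx0 hxy
    have h1x : (1:ℝ) ≤ Real.log x := by
      have := Real.log_le_log (Real.exp_pos 1) hex
      rwa [Real.log_exp] at this
    have h1y : (1:ℝ) ≤ Real.log y := by
      have := Real.log_le_log (Real.exp_pos 1) (hex.trans hxy)
      rwa [Real.log_exp] at this
    rw [gH, gH, logStar_eq_log hex, logStar_eq_log (hex.trans hxy)]
    have hlog : x * Real.log y ≤ y * Real.log x := by
      have hdiv : Real.log (y / x) ≤ y / x - 1 := Real.log_le_sub_one_of_pos (by positivity)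
      have hld : Real.log (y / x) = Real.log y - Real.log x := Real.log_div hy0.ne' hx0.ne'
      rw [hld] at hdiv
      have h2 : (Real.log y - Real.log x) * x ≤ y - x := by
        have hx' : y / x - 1 = (y - x) / x := by field_simp
        rw [hx', le_div_iff₀ hx0] at hdiv
        linarith
      nlinarith [mul_nonneg (sub_nonneg.mpr hxy) (sub_nonneg.mpr h1x)]
    have hyc : y ^ c ≤ x ^ c * (x / y) := by
      have h1 : y ^ c = x ^ c * (y / x) ^ c := by
        rw [Real.div_rpow hy0.le hx0.le]
        field_simp [ne_of_gt (Real.rpow_pos_of_pos hx0 c)]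
      have h2 : (y / x) ^ c ≤ (y / x) ^ (-1 : ℝ) :=
        Real.rpow_le_rpow_of_exponent_le (by rw [le_div_iff₀ hx0]; linarith) hc
      have h3 : (y / x) ^ (-1 : ℝ) = x / y := by
        rw [Real.rpow_neg_one, inv_div]
      rw [h1]
      calc x ^ c * (y / x) ^ c ≤ x ^ c * (y / x) ^ (-1:ℝ) :=
            mul_le_mul_of_nonneg_left h2 (Real.rpow_nonneg hx0.le c)
        _ = x ^ c * (x / y) := by rw [h3]
    calc y ^ c * Real.log y ≤ (x ^ c * (x / y)) * Real.log y :=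
          mul_le_mul_of_nonneg_right hyc (by linarith)
      _ = x ^ c * (x * Real.log y / y) := by ring
      _ ≤ x ^ c * Real.log x := by
          apply mul_le_mul_of_nonneg_left _ (Real.rpow_nonneg hx0.le c)
          rw [div_le_iff₀ hy0]
          linarith
  have low : ∀ x y : ℝ, 1 ≤ x → x ≤ y → y ≤ Real.exp 1 → gH c y ≤ gH c x := by
    intro x y h1 hxy hye
    have hx0 : (0:ℝ) < x := lt_of_lt_of_le one_pos h1
    rw [gH, gH, logStar_eq_one hx0 (hxy.trans hye), logStar_eq_one (hx0.trans_le hxy) hye,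
      mul_one, mul_one]
    exact Real.rpow_le_rpow_of_nonpos hx0 hxy (by linarith)
  intro x hx y hy hxy
  simp only [mem_Ici] at hx hy
  rcases le_total y (Real.exp 1) with hye | hey
  · exact low x y hx hxy hye
  · rcases le_total (Real.exp 1) x with hex | hxe
    · exact key x y hex hxy
    · exact (key _ y le_rfl hey).trans (low x _ hx hxe le_rfl)

lemma hasDerivAt_F {c : ℝ} (hc : c + 1 ≠ 0) {x : ℝ} (hx : 0 < x) :
    HasDerivAt (fun x : ℝ => x ^ (c+1) * Real.log x * (c+1)⁻¹ - x ^ (c+1) * ((c+1)⁻¹)^2)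
      (x ^ c * Real.log x) x := by
  have hp : HasDerivAt (fun x : ℝ => x ^ (c+1)) ((c+1) * x ^ c) x := by
    have := Real.hasDerivAt_rpow_const (x := x) (p := c+1) (Or.inl hx.ne')
    simpa using this
  have hl : HasDerivAt Real.log x⁻¹ x := Real.hasDerivAt_log hx.ne'
  have hm := (hp.mul hl).mul_const ((c+1)⁻¹)
  have h2 := hp.mul_const (((c+1)⁻¹)^2)
  have := hm.sub h2
  refine this.congr_deriv ?_
  have hxc : x ^ (c+1) * x⁻¹ = x ^ c := by
    rw [Real.rpow_add_one hx.ne']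
    field_simp
  rw [hxc]
  field_simp
  ring

lemma tendsto_F {c : ℝ} (hc : c + 1 < 0) :
    Tendsto (fun x : ℝ => x ^ (c+1) * Real.log x * (c+1)⁻¹ - x ^ (c+1) * ((c+1)⁻¹)^2)
      atTop (nhds 0) := by
  have hpos : 0 < -(c+1) := by linarith
  have t1 : Tendsto (fun x : ℝ => x ^ (c+1)) atTop (nhds 0) := by
    have := tendsto_rpow_neg_atTop hpos
    simpa using this
  have t2 : Tendsto (fun x : ℝ => x ^ (c+1) * Real.log x) atTop (nhds 0) := by
    have h := (isLittleO_log_rpow_atTop hpos).tendsto_div_nhds_zero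
    apply h.congr'
    filter_upwards [eventually_gt_atTop (0:ℝ)] with x hx
    rw [Real.rpow_neg hx.le, div_inv_eq_mul, mul_comm]
  have := (t2.mul_const ((c+1)⁻¹)).sub (t1.mul_const (((c+1)⁻¹)^2))
  simpa using this

lemma gH_contOn (c : ℝ) : ContinuousOn (gH c) (Ici 1) := by
  apply ContinuousOn.mul
  · intro x hx
    exact (Real.continuousAt_rpow_const x c
      (Or.inl (by simp only [mem_Ici] at hx; positivity))).continuousWithinAt
  · exact ContinuousOn.sup continuousOn_const (Real.continuousOn_log.mono (fun x hx => by
      simp only [mem_Ici] at hx; simp only [mem_compl_iff, mem_singleton_iff]; positivity))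

lemma gH_integrableOn_Ioc (c : ℝ) {a b : ℝ} (ha : 1 ≤ a) : IntegrableOn (gH c) (Ioc a b) := by
  rcases le_total a b with hab | hab
  · exact (((gH_contOn c).mono
      (Icc_subset_Ici_self.trans (Ici_subset_Ici.mpr ha))).integrableOn_Icc).mono_set
      Ioc_subset_Icc_self
  · simp [Ioc_eq_empty_of_le hab]

lemma deriv_nonneg_aux {c : ℝ} : ∀ x ∈ Ioi (Real.exp 1), 0 ≤ x ^ c * Real.log x := by
  intro x hx
  simp only [mem_Ioi] at hx
  have h1 : (1:ℝ) ≤ x := le_trans (by nlinarith [Real.add_one_le_exp (1:ℝ)]) hx.le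
  exact mul_nonneg (Real.rpow_nonneg (by linarith) c) (Real.log_nonneg h1)

lemma integrableOn_pow_log_Ioi {c : ℝ} (hc : c < -1) :
    IntegrableOn (fun x : ℝ => x ^ c * Real.log x) (Ioi (Real.exp 1)) := by
  have hc1 : c + 1 ≠ 0 := by linarith
  exact integrableOn_Ioi_deriv_of_nonneg'
    (fun x hx => hasDerivAt_F hc1 (lt_of_lt_of_le (Real.exp_pos 1) hx))
    deriv_nonneg_aux (tendsto_F (by linarith))

lemma integral_pow_log_Ioi {c : ℝ} (hc : c < -1) :
    ∫ x in Ioi (Real.exp 1), x ^ c * Real.log x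
      = -(Real.exp (c+1) * (c+1)⁻¹ - Real.exp (c+1) * ((c+1)⁻¹)^2) := by
  have hc1 : c + 1 ≠ 0 := by linarith
  have := integral_Ioi_of_hasDerivAt_of_nonneg'
    (g := fun x : ℝ => x ^ (c+1) * Real.log x * (c+1)⁻¹ - x ^ (c+1) * ((c+1)⁻¹)^2)
    (fun x hx => hasDerivAt_F hc1 (lt_of_lt_of_le (Real.exp_pos 1) hx))
    deriv_nonneg_aux (tendsto_F (by linarith))
  rw [this]
  simp only [Real.exp_one_rpow, Real.log_exp]
  ring

lemma gH_integrableOn_Ioi_e {c : ℝ} (hc : c < -1) :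
    IntegrableOn (gH c) (Ioi (Real.exp 1)) := by
  apply (integrableOn_pow_log_Ioi hc).congr_fun ?_ measurableSet_Ioi
  intro x hx
  rw [gH, logStar_eq_log (le_of_lt hx)]

lemma one_le_exp_one : (1:ℝ) ≤ Real.exp 1 := by nlinarith [Real.add_one_le_exp (1:ℝ)]

lemma gH_integrableOn_Ioi_one {c : ℝ} (hc : c < -1) :
    IntegrableOn (gH c) (Ioi 1) := by
  rw [← Ioc_union_Ioi_eq_Ioi one_le_exp_one, integrableOn_union]
  exact ⟨gH_integrableOn_Ioc c le_rfl, gH_integrableOn_Ioi_e hc⟩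

lemma gH_integral {c : ℝ} (hc : c < -1) :
    ∫ x in Ioi 1, gH c x = -(c+1)⁻¹ + ((c+1)⁻¹)^2 * Real.exp (c+1) := by
  have hc1 : c + 1 ≠ 0 := by linarith
  rw [← Ioc_union_Ioi_eq_Ioi one_le_exp_one,
    setIntegral_union (Ioc_disjoint_Ioi le_rfl) measurableSet_Ioi
      (gH_integrableOn_Ioc c le_rfl) (gH_integrableOn_Ioi_e hc)]
  have h1 : ∫ x in Ioc 1 (Real.exp 1), gH c x = ∫ x in Ioc 1 (Real.exp 1), x ^ c := by
    apply setIntegral_congr_fun measurableSet_Ioc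
    intro x hx
    rw [gH, logStar_eq_one (lt_trans one_pos hx.1) hx.2, mul_one]
  have h2 : ∫ x in Ioi (Real.exp 1), gH c x = ∫ x in Ioi (Real.exp 1), x ^ c * Real.log x := by
    apply setIntegral_congr_fun measurableSet_Ioi
    intro x hx
    rw [gH, logStar_eq_log (le_of_lt hx)]
  rw [h1, h2, integral_pow_log_Ioi hc, ← intervalIntegral.integral_of_le one_le_exp_one,
    integral_rpow (Or.inr ⟨by linarith, by
      rw [Set.uIcc_of_le one_le_exp_one]
      intro h
      exact absurd h.1 (by norm_num)⟩)]
  simp only [Real.exp_one_rpow, Real.one_rpow]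
  field_simp
  ring

lemma two_lt_exp_three_quarters : (2:ℝ) < Real.exp (3/4) := by
  have he3 : Real.exp ((3:ℝ)/4) ^ (4:ℕ) = Real.exp 3 := by
    rw [← Real.exp_nat_mul]; norm_num
  have h1 : Real.exp 3 = Real.exp 1 ^ (3:ℕ) := by rw [← Real.exp_nat_mul]; norm_num
  have he := Real.exp_one_gt_d9
  have hexp3 : (16:ℝ) < Real.exp 3 := by
    have h2 : (2.7182818283:ℝ)^(3:ℕ) ≤ Real.exp 1 ^ (3:ℕ) :=
      pow_le_pow_left₀ (by norm_num) he.le 3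
    rw [h1]
    nlinarith
  have hpos : (0:ℝ) < Real.exp ((3:ℝ)/4) := Real.exp_pos _
  by_contra hcon
  push_neg at hcon
  have : Real.exp ((3:ℝ)/4) ^ (4:ℕ) ≤ (2:ℝ)^(4:ℕ) := pow_le_pow_left₀ hpos.le hcon 4
  rw [he3] at this
  norm_num at this
  linarith

lemma exp_quarter_gt : (32/25:ℝ) < Real.exp (1/4) := by
  have he1 : Real.exp ((1:ℝ)/4) ^ (4:ℕ) = Real.exp 1 := by
    rw [← Real.exp_nat_mul]; norm_num
  have he := Real.exp_one_gt_d9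
  have hpos : (0:ℝ) < Real.exp ((1:ℝ)/4) := Real.exp_pos _
  by_contra hcon
  push_neg at hcon
  have : Real.exp ((1:ℝ)/4) ^ (4:ℕ) ≤ (32/25:ℝ)^(4:ℕ) := pow_le_pow_left₀ hpos.le hcon 4
  rw [he1] at this
  norm_num at this
  linarith

/-- For every `H ∈ (0,1)`:
`Σ_{j=2}^{∞} j^{1/4} (log_* j)^{3/4} j^{H−5/2} < (5/4−H)⁻¹ + (5/4−H)⁻² e^{H−5/4}`;
consequently the sum is `< 2.5` if `0 < H < 1/2` and `< 16.5` if `1/2 < H < 1`.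
Moreover `Σ_{j=2}^{∞} j^{1/4}(log_* j)^{3/4} j^{H−5/2} < ∫_1^∞ x^{H−9/4} log_*(x) dx
 = (5/4−H)⁻¹ + (5/4−H)⁻² e^{H−5/4}`.
(The sum over `j ≥ 2` is realized by the index shift `j = n + 2`, `n : ℕ`.) -/
theorem statement19 (H : ℝ) (hH0 : 0 < H) (hH1 : H < 1) :
    Summable (fun n : ℕ =>
      ((n : ℝ)+2)^((1:ℝ)/4) * (logStar ((n : ℝ)+2))^((3:ℝ)/4) * ((n : ℝ)+2)^(H - 5/2)) ∧
    (∑' n : ℕ,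
      ((n : ℝ)+2)^((1:ℝ)/4) * (logStar ((n : ℝ)+2))^((3:ℝ)/4) * ((n : ℝ)+2)^(H - 5/2))
      < (5/4 - H)⁻¹ + (5/4 - H)⁻¹^2 * Real.exp (H - 5/4) ∧
    (H < 1/2 → (∑' n : ℕ,
      ((n : ℝ)+2)^((1:ℝ)/4) * (logStar ((n : ℝ)+2))^((3:ℝ)/4) * ((n : ℝ)+2)^(H - 5/2))
      < 2.5) ∧
    (1/2 < H → (∑' n : ℕ,
      ((n : ℝ)+2)^((1:ℝ)/4) * (logStar ((n : ℝ)+2))^((3:ℝ)/4) * ((n : ℝ)+2)^(H - 5/2))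
      < 16.5) ∧
    (∑' n : ℕ,
      ((n : ℝ)+2)^((1:ℝ)/4) * (logStar ((n : ℝ)+2))^((3:ℝ)/4) * ((n : ℝ)+2)^(H - 5/2))
      < ∫ x in Set.Ioi (1:ℝ), x^(H - 9/4) * logStar x ∧
    (∫ x in Set.Ioi (1:ℝ), x^(H - 9/4) * logStar x)
      = (5/4 - H)⁻¹ + (5/4 - H)⁻¹^2 * Real.exp (H - 5/4) := by

  have hc : H - 9/4 < -1 := by linarith
  have hc1 : (H - 9/4) + 1 < 0 := by linarith
  set f : ℕ → ℝ := fun n =>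
    ((n : ℝ)+2)^((1:ℝ)/4) * (logStar ((n : ℝ)+2))^((3:ℝ)/4) * ((n : ℝ)+2)^(H - 5/2) with hf_def
  -- the integral in the goal is the integral of gH (H - 9/4)
  have hgint : (∫ x in Set.Ioi (1:ℝ), x^(H - 9/4) * logStar x) = ∫ x in Ioi 1, gH (H - 9/4) x := rfl
  -- basic term facts
  have hf_nonneg : ∀ n : ℕ, 0 ≤ f n := by
    intro n
    apply mul_nonneg (mul_nonneg (Real.rpow_nonneg (by positivity) _)
      (Real.rpow_nonneg (le_trans zero_le_one (one_le_logStar _)) _))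
      (Real.rpow_nonneg (by positivity) _)
  have hf_le : ∀ n : ℕ, f n ≤ gH (H - 9/4) ((n : ℝ) + 2) := by
    intro n
    have hpos : (0:ℝ) < (n : ℝ) + 2 := by positivity
    have hcomb : ((n : ℝ)+2)^((1:ℝ)/4) * ((n : ℝ)+2)^(H - 5/2) = ((n : ℝ)+2) ^ (H - 9/4) := by
      rw [← Real.rpow_add hpos]
      congr 1
      ring
    have hlog : (logStar ((n : ℝ)+2))^((3:ℝ)/4) ≤ logStar ((n : ℝ)+2) := by
      have := Real.rpow_le_rpow_of_exponent_le (one_le_logStar ((n : ℝ)+2))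
        (by norm_num : (3:ℝ)/4 ≤ 1)
      rwa [Real.rpow_one] at this
    calc f n = (((n : ℝ)+2)^((1:ℝ)/4) * ((n : ℝ)+2)^(H - 5/2)) *
          (logStar ((n : ℝ)+2))^((3:ℝ)/4) := by rw [hf_def]; ring
      _ = ((n : ℝ)+2) ^ (H - 9/4) * (logStar ((n : ℝ)+2))^((3:ℝ)/4) := by rw [hcomb]
      _ ≤ ((n : ℝ)+2) ^ (H - 9/4) * logStar ((n : ℝ)+2) :=
          mul_le_mul_of_nonneg_left hlog (Real.rpow_nonneg hpos.le (H - 9/4))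
      _ = gH (H - 9/4) ((n : ℝ)+2) := rfl
  -- integrability on Ioi 2
  have hInt2 : IntegrableOn (gH (H - 9/4)) (Ioi 2) :=
    (gH_integrableOn_Ioi_one hc).mono_set (Ioi_subset_Ioi (by norm_num))
  have hae2 : 0 ≤ᵐ[volume.restrict (Ioi (2:ℝ))] gH (H - 9/4) := by
    filter_upwards [ae_restrict_mem measurableSet_Ioi] with x hx
    exact gH_nonneg (by simp only [mem_Ioi] at hx; linarith)
  -- partial sums bounded
  set B : ℝ := gH (H - 9/4) 2 + ∫ x in Ioi 2, gH (H - 9/4) x with hB_def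
  have hpartial : ∀ N : ℕ, ∑ i ∈ Finset.range N, f i ≤ B := by
    intro N
    have step1 : ∑ i ∈ Finset.range N, f i ≤ ∑ i ∈ Finset.range N, gH (H - 9/4) ((i : ℝ) + 2) :=
      Finset.sum_le_sum (fun i _ => hf_le i)
    refine step1.trans ?_
    rcases N with _ | n
    · simp only [Finset.range_zero, Finset.sum_empty]
      exact add_nonneg (gH_nonneg (by norm_num))
        (setIntegral_nonneg measurableSet_Ioi (fun x hx =>
          gH_nonneg (by simp only [mem_Ioi] at hx; linarith)))
    · rw [Finset.sum_range_succ']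
      simp only [Nat.cast_zero, zero_add]
      rw [hB_def, add_comm (gH (H - 9/4) 2)]
      apply (add_le_add_iff_right _).mpr
      have hanti : AntitoneOn (gH (H - 9/4)) (Icc (2:ℝ) (2 + (n:ℕ))) :=
        (gH_anti hc.le).mono (Icc_subset_Ici_self.trans (Ici_subset_Ici.mpr (by norm_num)))
      have hsum := hanti.sum_le_integral
      have heq : ∀ i : ℕ, gH (H - 9/4) (((i:ℕ) + 1 : ℕ) + 2 : ℝ) = gH (H - 9/4) (2 + ((i + 1 : ℕ) : ℝ)) := by
        intro i
        congr 1
        push_cast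
        ring
      calc ∑ i ∈ Finset.range n, gH (H - 9/4) (((i + 1 : ℕ) : ℝ) + 2)
          = ∑ i ∈ Finset.range n, gH (H - 9/4) (2 + ((i + 1 : ℕ) : ℝ)) := by
            apply Finset.sum_congr rfl
            intro i _
            congr 1
            push_cast
            ring
        _ ≤ ∫ x in (2:ℝ)..(2 + (n:ℕ)), gH (H - 9/4) x := hsum
        _ = ∫ x in Ioc (2:ℝ) (2 + (n:ℕ)), gH (H - 9/4) x := by
            rw [intervalIntegral.integral_of_le (le_add_of_nonneg_right (Nat.cast_nonneg n))]
        _ ≤ ∫ x in Ioi (2:ℝ), gH (H - 9/4) x := by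
            apply setIntegral_mono_set hInt2 hae2
            exact HasSubset.Subset.eventuallyLE Ioc_subset_Ioi_self
  have hsummable : Summable f := summable_of_sum_range_le hf_nonneg hpartial
  have htsum_le_B : (∑' n : ℕ, f n) ≤ B := Real.tsum_le_of_sum_range_le hf_nonneg hpartial
  -- strict inequality: B < ∫ over Ioi 1
  have hB_lt : B < ∫ x in Ioi 1, gH (H - 9/4) x := by
    have hsplit : (∫ x in Ioi 1, gH (H - 9/4) x) = (∫ x in Ioc (1:ℝ) 2, gH (H - 9/4) x) + ∫ x in Ioi 2, gH (H - 9/4) x := by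
      rw [← Ioc_union_Ioi_eq_Ioi (by norm_num : (1:ℝ) ≤ 2),
        setIntegral_union (Ioc_disjoint_Ioi le_rfl) measurableSet_Ioi
          (gH_integrableOn_Ioc (H - 9/4) le_rfl) hInt2]
    rw [hsplit, hB_def]
    apply (add_lt_add_iff_right _).mpr
    -- gH (H - 9/4) 2 < ∫ over Ioc 1 2
    have hg2 : gH (H - 9/4) 2 = (2:ℝ) ^ (H - 9/4) := by
      rw [gH, logStar_eq_one (by norm_num) two_lt_exp_one.le, mul_one]
    have hsplit2 : (∫ x in Ioc (1:ℝ) 2, gH (H - 9/4) x)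
        = (∫ x in Ioc (1:ℝ) (3/2), gH (H - 9/4) x) + ∫ x in Ioc (3/2:ℝ) 2, gH (H - 9/4) x := by
      rw [← Ioc_union_Ioc_eq_Ioc (by norm_num : (1:ℝ) ≤ 3/2) (by norm_num : (3/2:ℝ) ≤ 2),
        setIntegral_union (Ioc_disjoint_Ioc_of_le le_rfl) measurableSet_Ioc
          (gH_integrableOn_Ioc (H - 9/4) le_rfl) (gH_integrableOn_Ioc (H - 9/4) (show (1:ℝ) ≤ 3/2 by norm_num))]
    have hlow1 : (1/2 : ℝ) * (3/2:ℝ)^(H - 9/4) ≤ ∫ x in Ioc (1:ℝ) (3/2), gH (H - 9/4) x := by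
      have := setIntegral_mono_on (f := fun _ : ℝ => (3/2:ℝ)^(H - 9/4)) (g := gH (H - 9/4))
        (integrableOn_const measure_Ioc_lt_top.ne)
        (gH_integrableOn_Ioc (H - 9/4) le_rfl)
        measurableSet_Ioc (fun x hx => by
          have hx1 : (1:ℝ) < x := hx.1
          have hx2 : x ≤ 3/2 := hx.2
          calc (3/2:ℝ)^(H - 9/4) ≤ x ^ (H - 9/4) := Real.rpow_le_rpow_of_nonpos (by linarith) hx2 (by linarith)
            _ = x ^ (H - 9/4) * 1 := (mul_one _).symm
            _ ≤ x ^ (H - 9/4) * logStar x :=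
                mul_le_mul_of_nonneg_left (one_le_logStar x) (Real.rpow_nonneg (by linarith) (H - 9/4))
            _ = gH (H - 9/4) x := rfl)
      rwa [setIntegral_const, Real.volume_real_Ioc_of_le (by norm_num), smul_eq_mul,
        show (3/2 : ℝ) - 1 = 1/2 by norm_num] at this
    have hlow2 : (1/2 : ℝ) * (2:ℝ)^(H - 9/4) ≤ ∫ x in Ioc (3/2:ℝ) 2, gH (H - 9/4) x := by
      have := setIntegral_mono_on (f := fun _ : ℝ => (2:ℝ)^(H - 9/4)) (g := gH (H - 9/4))
        (integrableOn_const measure_Ioc_lt_top.ne)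
        (gH_integrableOn_Ioc (H - 9/4) (show (1:ℝ) ≤ 3/2 by norm_num))
        measurableSet_Ioc (fun x hx => by
          have hx1 : (3/2:ℝ) < x := hx.1
          have hx2 : x ≤ 2 := hx.2
          calc (2:ℝ)^(H - 9/4) ≤ x ^ (H - 9/4) := Real.rpow_le_rpow_of_nonpos (by linarith) hx2 (by linarith)
            _ = x ^ (H - 9/4) * 1 := (mul_one _).symm
            _ ≤ x ^ (H - 9/4) * logStar x :=
                mul_le_mul_of_nonneg_left (one_le_logStar x) (Real.rpow_nonneg (by linarith) (H - 9/4))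
            _ = gH (H - 9/4) x := rfl)
      rwa [setIntegral_const, Real.volume_real_Ioc_of_le (by norm_num), smul_eq_mul,
        show (2 : ℝ) - 3/2 = 1/2 by norm_num] at this
    have hstrict : (2:ℝ)^(H - 9/4) < (3/2:ℝ)^(H - 9/4) :=
      Real.rpow_lt_rpow_of_neg (by norm_num) (by norm_num) (by linarith)
    rw [hg2, hsplit2]
    linarith
  -- value of the integral
  have hval : (∫ x in Ioi 1, gH (H - 9/4) x)
      = (5/4 - H)⁻¹ + (5/4 - H)⁻¹^2 * Real.exp (H - 5/4) := by
    rw [gH_integral hc]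
    have h1 : (H - 9/4) + 1 = -(5/4 - H) := by ring
    have h2 : H - 5/4 = -(5/4 - H) := by ring
    rw [h1, h2, inv_neg]
    ring
  have htsum_lt : (∑' n : ℕ, f n) < ∫ x in Ioi 1, gH (H - 9/4) x := lt_of_le_of_lt htsum_le_B hB_lt
  have htsum_lt_val : (∑' n : ℕ, f n)
      < (5/4 - H)⁻¹ + (5/4 - H)⁻¹^2 * Real.exp (H - 5/4) := by rw [← hval]; exact htsum_lt
  -- numeric bounds
  have hs_pos : (0:ℝ) < 5/4 - H := by linarith
  have hinv_pos : (0:ℝ) < (5/4 - H)⁻¹ := by positivity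
  refine ⟨hsummable, htsum_lt_val, ?_, ?_, htsum_lt, hval⟩
  · -- H < 1/2 : bound 2.5
    intro hH
    refine lt_of_lt_of_le htsum_lt_val ?_
    have hs : (3/4 : ℝ) < 5/4 - H := by linarith
    have hinv : (5/4 - H)⁻¹ < 4/3 := by
      have : (0:ℝ) < 3/4 := by norm_num
      calc (5/4 - H)⁻¹ < (3/4 : ℝ)⁻¹ := by
            apply inv_strictAnti₀ this hs
        _ = 4/3 := by norm_num
    have hinv2 : (5/4 - H)⁻¹^2 < 16/9 := by
      calc (5/4 - H)⁻¹^2 = (5/4 - H)⁻¹ * (5/4 - H)⁻¹ := pow_two _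
        _ < (4/3) * (4/3) := mul_lt_mul'' hinv hinv hinv_pos.le hinv_pos.le
        _ = 16/9 := by norm_num
    have hexp : Real.exp (H - 5/4) < 1/2 := by
      have h1 : Real.exp (H - 5/4) < Real.exp (-(3/4)) := by
        apply Real.exp_lt_exp.mpr
        linarith
      have h2 : Real.exp (-(3/4)) < 1/2 := by
        have h3 := two_lt_exp_three_quarters
        have h4 : Real.exp (-(3/4 : ℝ)) * Real.exp (3/4) = 1 := by
          rw [← Real.exp_add]; norm_num
        have h5 : Real.exp (-(3/4:ℝ)) * 2 < Real.exp (-(3/4:ℝ)) * Real.exp (3/4) :=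
          mul_lt_mul_of_pos_left h3 (Real.exp_pos _)
        rw [h4] at h5
        linarith
      linarith
    have hexp_pos : (0:ℝ) < Real.exp (H - 5/4) := Real.exp_pos _
    have hm : (5/4 - H)⁻¹^2 * Real.exp (H - 5/4) < (16/9) * (1/2) :=
      mul_lt_mul'' hinv2 hexp (by positivity) hexp_pos.le
    linarith
  · -- 1/2 < H : bound 16.5
    intro hH
    refine lt_of_lt_of_le htsum_lt_val ?_
    have hs : (1/4 : ℝ) < 5/4 - H := by linarith
    have hinv : (5/4 - H)⁻¹ < 4 := by
      have : (0:ℝ) < 1/4 := by norm_num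
      calc (5/4 - H)⁻¹ < (1/4 : ℝ)⁻¹ := by
            apply inv_strictAnti₀ this hs
        _ = 4 := by norm_num
    have hinv2 : (5/4 - H)⁻¹^2 < 16 := by
      calc (5/4 - H)⁻¹^2 = (5/4 - H)⁻¹ * (5/4 - H)⁻¹ := pow_two _
        _ < 4 * 4 := mul_lt_mul'' hinv hinv hinv_pos.le hinv_pos.le
        _ = 16 := by norm_num
    have hexp : Real.exp (H - 5/4) < 25/32 := by
      have h1 : Real.exp (H - 5/4) < Real.exp (-(1/4)) := by
        apply Real.exp_lt_exp.mpr
        linarith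
      have h2 : Real.exp (-(1/4)) < 25/32 := by
        have h3 := exp_quarter_gt
        have h4 : Real.exp (-(1/4 : ℝ)) * Real.exp (1/4) = 1 := by
          rw [← Real.exp_add]; norm_num
        have h5 : Real.exp (-(1/4:ℝ)) * (32/25) < Real.exp (-(1/4:ℝ)) * Real.exp (1/4) :=
          mul_lt_mul_of_pos_left h3 (Real.exp_pos _)
        rw [h4] at h5
        linarith
      linarith
    have hexp_pos : (0:ℝ) < Real.exp (H - 5/4) := Real.exp_pos _
    have hm : (5/4 - H)⁻¹^2 * Real.exp (H - 5/4) < 16 * (25/32) :=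
      mul_lt_mul'' hinv2 hexp (by positivity) hexp_pos.le
    linarith
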